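/- Let a be a continuous nonnegative quadratic form on the cotangent bundle of a manifold M, let ω ∈ H^{x,y} have driving path ξ with ω_t ∈ K for some t ∈ [0,1], where K ⊆ M is closed. If w⁻, w⁺ are C¹ functions on a neighbourhood of the path with a(∇w^±, ∇w^±) ≤ 1 everywhere and w⁺ = w⁻ on K, then w⁺(y) − w⁻(x) ≤ √(I(ω)). -/

import Mathlib

open Set MeasureTheory intervalIntegral
open scoped RealInnerProductSpace

set_option maxHeartbeats 1000000

lemma form_cs {d : ℕ}
    (a : EuclideanSpace ℝ (Fin d) → EuclideanSpace ℝ (Fin d) →L[ℝ] EuclideanSpace ℝ (Fin d))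
    (hasymm : ∀ x u v, ⟪a x u, v⟫ = ⟪u, a x v⟫)
    (hapos : ∀ x v, 0 ≤ ⟪v, a x v⟫)
    (p u v : EuclideanSpace ℝ (Fin d)) :
    ⟪u, a p v⟫ ≤ Real.sqrt ⟪u, a p u⟫ * Real.sqrt ⟪v, a p v⟫ := by
  have hsym : ∀ u v, ⟪u, a p v⟫ = ⟪v, a p u⟫ := fun u v => by
    rw [← hasymm p u v, real_inner_comm]
  have key : ∀ lam : ℝ,
      0 ≤ ⟪v, a p v⟫ * (lam * lam) + (2 * ⟪u, a p v⟫) * lam + ⟪u, a p u⟫ := by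
    intro lam
    have h0 := hapos p (u + lam • v)
    have hexp : ⟪u + lam • v, a p (u + lam • v)⟫
        = ⟪u, a p u⟫ + lam * ⟪u, a p v⟫ + lam * ⟪v, a p u⟫ + lam * lam * ⟪v, a p v⟫ := by
      simp only [map_add, ContinuousLinearMap.map_smul, inner_add_left, inner_add_right,
        real_inner_smul_left, real_inner_smul_right]
      ring
    rw [hexp] at h0
    rw [← hsym u v] at h0
    linarith
  have hd := discrim_le_zero key
  rw [discrim] at hd
  have hsq : ⟪u, a p v⟫ ^ 2 ≤ ⟪u, a p u⟫ * ⟪v, a p v⟫ := by nlinarith [hd]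
  calc ⟪u, a p v⟫ ≤ |⟪u, a p v⟫| := le_abs_self _
    _ = Real.sqrt (⟪u, a p v⟫ ^ 2) := (Real.sqrt_sq_eq_abs _).symm
    _ ≤ Real.sqrt (⟪u, a p u⟫ * ⟪v, a p v⟫) := Real.sqrt_le_sqrt hsq
    _ = Real.sqrt ⟪u, a p u⟫ * Real.sqrt ⟪v, a p v⟫ := Real.sqrt_mul (hapos p u) _

lemma seg_bound {d : ℕ}
    (a : EuclideanSpace ℝ (Fin d) → EuclideanSpace ℝ (Fin d) →L[ℝ] EuclideanSpace ℝ (Fin d))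
    (hacont : Continuous a)
    (hasymm : ∀ x u v, ⟪a x u, v⟫ = ⟪u, a x v⟫)
    (hapos : ∀ x v, 0 ≤ ⟪v, a x v⟫)
    (x : EuclideanSpace ℝ (Fin d))
    (ω ξ : ℝ → EuclideanSpace ℝ (Fin d))
    (hξint : IntervalIntegrable (fun s => a (ω s) (ξ s)) volume 0 1)
    (hAC : ∀ t ∈ Icc (0:ℝ) 1, ω t = x + ∫ s in (0:ℝ)..t, a (ω s) (ξ s))
    (hEint : IntervalIntegrable (fun t => ⟪ξ t, a (ω t) (ξ t)⟫) volume 0 1)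
    (w : EuclideanSpace ℝ (Fin d) → ℝ) (hw : ContDiff ℝ 1 w)
    (hwgrad : ∀ z, ⟪gradient w z, a z (gradient w z)⟫ ≤ 1)
    (p q : ℝ) (hp : 0 ≤ p) (hpq : p ≤ q) (hq : q ≤ 1) :
    w (ω q) - w (ω p) ≤ ∫ t in p..q, Real.sqrt ⟪ξ t, a (ω t) (ξ t)⟫ := by
  set f : ℝ → EuclideanSpace ℝ (Fin d) := fun s => a (ω s) (ξ s) with hf
  set e : ℝ → ℝ := fun t => ⟪ξ t, a (ω t) (ξ t)⟫ with he
  set φ : ℝ → ℝ := fun t => Real.sqrt (e t) with hφ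
  have henn : ∀ t, 0 ≤ e t := fun t => hapos (ω t) (ξ t)
  -- integrability of φ on [0,1]
  have hφint01 : IntervalIntegrable φ volume 0 1 := by
    have hbnd : IntervalIntegrable (fun t => (e t + 1) / 2) volume 0 1 :=
      (hEint.add (_root_.intervalIntegrable_const (c := 1))).div_const 2
    refine hbnd.mono_fun
      (Real.continuous_sqrt.comp_aestronglyMeasurable hEint.def'.aestronglyMeasurable)
      (Filter.Eventually.of_forall fun t => ?_)
    ·
      have h1 : 0 ≤ φ t := Real.sqrt_nonneg _
      have h2 : φ t ≤ (e t + 1) / 2 := by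
        have hsq : Real.sqrt (e t) ^ 2 = e t := Real.sq_sqrt (henn t)
        have := sq_nonneg (Real.sqrt (e t) - 1)
        simp only [hφ]
        nlinarith
      have h3 : (0:ℝ) ≤ (e t + 1) / 2 := le_trans h1 h2
      simp only [Real.norm_eq_abs, abs_of_nonneg h1, abs_of_nonneg h3]
      exact h2
  -- continuity of ω on [0,1]
  have hI01 : uIcc (0:ℝ) 1 = Icc 0 1 := uIcc_of_le zero_le_one
  have hωcont : ContinuousOn ω (Icc 0 1) := by
    have hprim : ContinuousOn (fun t => x + ∫ s in (0:ℝ)..t, f s) (Icc 0 1) := by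
      refine continuousOn_const.add ?_
      have := intervalIntegral.continuousOn_primitive_interval' hξint
        (by rw [hI01]; exact ⟨le_rfl, zero_le_one⟩)
      rwa [hI01] at this
    exact hprim.congr fun t ht => hAC t ht
  -- continuity of the gradient
  have hGcont : Continuous (gradient w) := by
    have h1 : Continuous (fderiv ℝ w) := hw.continuous_fderiv one_ne_zero
    exact (InnerProductSpace.toDual ℝ (EuclideanSpace ℝ (Fin d))).symm.continuous.comp h1
  have hinner : ∀ z v, ⟪gradient w z, v⟫ = fderiv ℝ w z v := fun z v =>
    InnerProductSpace.toDual_symm_apply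
  -- main claim with (1+ε) slack
  have claim : ∀ ε > (0:ℝ), w (ω q) - w (ω p) ≤ (1 + ε) * ∫ t in p..q, φ t := by
    intro ε hε
    set S : Set ℝ := {t | w (ω t) - w (ω p) ≤ (1 + ε) * ∫ s in p..t, φ s} with hS
    have hIpq : Icc p q ⊆ Icc (0:ℝ) 1 := Icc_subset_Icc hp hq
    have hφpq : ∀ c d : ℝ, p ≤ c → c ≤ d → d ≤ q → IntervalIntegrable φ volume c d := by
      intro c d h1 h2 h3
      refine hφint01.mono_set ?_
      rw [hI01, uIcc_of_le h2]
      exact Icc_subset_Icc (hp.trans h1) ((h3.trans hq))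
    have hScl : IsClosed (S ∩ Icc p q) := by
      have hcw : ContinuousOn (fun t => w (ω t) - w (ω p)) (Icc p q) :=
        ((hw.continuous.comp_continuousOn (hωcont.mono hIpq)).sub continuousOn_const)
      have hcΦ : ContinuousOn (fun t => (1 + ε) * ∫ s in p..t, φ s) (Icc p q) := by
        refine continuousOn_const.mul ?_
        have := intervalIntegral.continuousOn_primitive_interval'
          (hφpq p q le_rfl hpq le_rfl) (by rw [uIcc_of_le hpq]; exact ⟨le_rfl, hpq⟩)
        rwa [uIcc_of_le hpq] at this
      have := (hcΦ.sub hcw).preimage_isClosed_of_isClosed isClosed_Icc (isClosed_Ici (a := (0:ℝ)))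
      convert this using 1
      ext t
      simp only [hS, mem_inter_iff, mem_setOf_eq, mem_preimage, mem_Ici, Pi.sub_apply, sub_nonneg]
      tauto
    have hstep : ∀ t ∈ S ∩ Ico p q, ∀ v ∈ Ioi t, (S ∩ Ioc t v).Nonempty := by
      intro t ht v hv
      have ht01 : t ∈ Icc (0:ℝ) 1 := ⟨hp.trans ht.2.1, ht.2.2.le.trans hq⟩
      -- find δ such that the form on gradients is < 1+ε near ω t
      have hF2 : Continuous (fun zz : (EuclideanSpace ℝ (Fin d)) × (EuclideanSpace ℝ (Fin d)) =>
          ⟪gradient w zz.1, a zz.2 (gradient w zz.1)⟫) := by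
        have h1 : Continuous (fun zz : (EuclideanSpace ℝ (Fin d)) × (EuclideanSpace ℝ (Fin d)) =>
            (a zz.2) (gradient w zz.1)) :=
          isBoundedBilinearMap_apply.continuous.comp
            ((hacont.comp continuous_snd).prodMk (hGcont.comp continuous_fst))
        exact (hGcont.comp continuous_fst).inner h1
      have hmem : ⟪gradient w (ω t), a (ω t) (gradient w (ω t))⟫ < 1 + ε :=
        lt_of_le_of_lt (hwgrad (ω t)) (by linarith)
      have hnhds : (fun zz : (EuclideanSpace ℝ (Fin d)) × (EuclideanSpace ℝ (Fin d)) =>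
            ⟪gradient w zz.1, a zz.2 (gradient w zz.1)⟫) ⁻¹' (Iio (1 + ε)) ∈
          nhds (ω t) ×ˢ nhds (ω t) := by
        rw [← nhds_prod_eq]
        exact hF2.continuousAt.preimage_mem_nhds (Iio_mem_nhds hmem)
      obtain ⟨A, hA, B, hB, hAB⟩ := Filter.mem_prod_iff.1 hnhds
      obtain ⟨δ₁, hδ₁pos, hδ₁⟩ := Metric.mem_nhds_iff.1 hA
      obtain ⟨δ₂, hδ₂pos, hδ₂⟩ := Metric.mem_nhds_iff.1 hB
      set δ := min δ₁ δ₂ with hδdef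
      have hδpos : 0 < δ := lt_min hδ₁pos hδ₂pos
      have hball : ∀ z₁ z₂ : EuclideanSpace ℝ (Fin d), z₁ ∈ Metric.ball (ω t) δ →
          z₂ ∈ Metric.ball (ω t) δ →
          ⟪gradient w z₁, a z₂ (gradient w z₁)⟫ < 1 + ε := by
        intro z₁ z₂ h₁ h₂
        have : (z₁, z₂) ∈ A ×ˢ B :=
          mk_mem_prod (hδ₁ (Metric.ball_subset_ball (min_le_left _ _) h₁))
            (hδ₂ (Metric.ball_subset_ball (min_le_right _ _) h₂))
        exact hAB this
      -- find η for continuity of ω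
      have hcwt : ContinuousWithinAt ω (Icc 0 1) t := hωcont t ht01
      have hpre : ω ⁻¹' Metric.ball (ω t) δ ∈ nhdsWithin t (Icc 0 1) :=
        hcwt (Metric.ball_mem_nhds _ hδpos)
      obtain ⟨η, hηpos, hη⟩ := Metric.mem_nhdsWithin_iff.1 hpre
      -- the point u
      set u := min v (min q (t + η / 2)) with hu
      have htu : t < u := lt_min hv (lt_min ht.2.2 (by linarith))
      have huq : u ≤ q := (min_le_right _ _).trans (min_le_left _ _)
      have huv : u ≤ v := min_le_left _ _
      have hu01 : u ∈ Icc (0:ℝ) 1 := ⟨ht01.1.trans htu.le, huq.trans hq⟩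
      have hsball : ∀ s, s ∈ Icc t u → ω s ∈ Metric.ball (ω t) δ := by
        intro s hs
        refine hη ⟨?_, ⟨ht01.1.trans hs.1, hs.2.trans hu01.2⟩⟩
        rw [Metric.mem_ball, Real.dist_eq, abs_of_nonneg (by linarith [hs.1])]
        have : u ≤ t + η / 2 := (min_le_right _ _).trans (min_le_right _ _)
        linarith [hs.2]
      -- Δ and its formula
      have hfsub : ∀ c d : ℝ, 0 ≤ c → c ≤ d → d ≤ 1 → IntervalIntegrable f volume c d := by
        intro c d h1 h2 h3
        refine hξint.mono_set ?_
        rw [hI01, uIcc_of_le h2]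
        exact Icc_subset_Icc h1 h3
      have hΔ : ω u - ω t = ∫ s in t..u, f s := by
        rw [hAC u hu01, hAC t ht01]
        rw [add_sub_add_left_eq_sub]
        exact intervalIntegral.integral_interval_sub_left
          (hfsub 0 u le_rfl hu01.1 hu01.2) (hfsub 0 t le_rfl ht01.1 ht01.2)
      have hIφtu : IntervalIntegrable φ volume t u := hφpq t u ht.2.1 htu.le huq
      have hIftu : IntervalIntegrable f volume t u := hfsub t u ht01.1 htu.le hu01.2
      have hΦtu_nn : 0 ≤ ∫ s in t..u, φ s :=
        intervalIntegral.integral_nonneg htu.le fun s _ => Real.sqrt_nonneg _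
      have hΔnorm : ‖ω u - ω t‖ < δ := by
        rw [← dist_eq_norm]
        exact Metric.mem_ball.1 (hsball u ⟨htu.le, le_rfl⟩)
      have inner_est : ∀ z ∈ Metric.ball (ω t) δ,
          ⟪gradient w z, ω u - ω t⟫ ≤ Real.sqrt (1 + ε) * ∫ s in t..u, φ s := by
        intro z hz
        have hLint : IntervalIntegrable (fun s => ⟪gradient w z, f s⟫) volume t u :=
          ⟨(innerSL ℝ (gradient w z)).integrable_comp hIftu.1,
            (innerSL ℝ (gradient w z)).integrable_comp hIftu.2⟩
        have heq : ⟪gradient w z, ω u - ω t⟫ = ∫ s in t..u, ⟪gradient w z, f s⟫ := by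
          rw [hΔ]
          exact (ContinuousLinearMap.intervalIntegral_comp_comm
            (innerSL ℝ (gradient w z)) hIftu).symm
        rw [heq]
        have hRint : IntervalIntegrable (fun s => Real.sqrt (1 + ε) * φ s) volume t u :=
          hIφtu.const_mul _
        refine le_trans (intervalIntegral.integral_mono_on htu.le hLint hRint ?_) ?_
        · intro s hs
          have h1 : ⟪gradient w z, f s⟫
              ≤ Real.sqrt ⟪gradient w z, a (ω s) (gradient w z)⟫ * Real.sqrt (e s) :=
            form_cs a hasymm hapos (ω s) (gradient w z) (ξ s)
          have h2 : ⟪gradient w z, a (ω s) (gradient w z)⟫ < 1 + ε :=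
            hball z (ω s) hz (hsball s hs)
          exact h1.trans (mul_le_mul_of_nonneg_right (Real.sqrt_le_sqrt h2.le)
            (Real.sqrt_nonneg _))
        · rw [intervalIntegral.integral_const_mul]
      have key : w (ω u) - w (ω t) ≤ (1 + ε) * ∫ s in t..u, φ s := by
        set Δ := ω u - ω t with hΔdef
        set c : ℝ → EuclideanSpace ℝ (Fin d) := fun r => ω t + r • Δ with hcdef
        have hcc : Continuous c := continuous_const.add (continuous_id.smul continuous_const)
        have hgderiv : ∀ r ∈ uIcc (0:ℝ) 1,
            HasDerivAt (fun r => w (c r)) ⟪gradient w (c r), Δ⟫ r := by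
          intro r _
          have hline : HasDerivAt c Δ r := by
            simpa [hcdef] using ((hasDerivAt_id r).smul_const Δ).const_add (ω t)
          have hwd : HasFDerivAt w (fderiv ℝ w (c r)) (c r) :=
            (hw.differentiable one_ne_zero (c r)).hasFDerivAt
          have hcomp := hwd.comp_hasDerivAt r hline
          rw [hinner]
          exact hcomp
        have hg'cont : Continuous fun r => ⟪gradient w (c r), Δ⟫ :=
          (hGcont.comp hcc).inner continuous_const
        have hFTC := intervalIntegral.integral_eq_sub_of_hasDerivAt hgderiv
          (hg'cont.intervalIntegrable 0 1)
        have hc1 : c 1 = ω u := by simp [hcdef, hΔdef]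
        have hc0 : c 0 = ω t := by simp [hcdef]
        rw [hc1, hc0] at hFTC
        rw [← hFTC]
        have hbd : ∀ r ∈ Icc (0:ℝ) 1,
            ⟪gradient w (c r), Δ⟫ ≤ Real.sqrt (1 + ε) * ∫ s in t..u, φ s := by
          intro r hr
          refine inner_est (c r) ?_
          rw [Metric.mem_ball, dist_eq_norm]
          have hcr : c r - ω t = r • Δ := by simp [hcdef]
          rw [hcr, norm_smul, Real.norm_eq_abs, abs_of_nonneg hr.1]
          calc r * ‖Δ‖ ≤ 1 * ‖Δ‖ := mul_le_mul_of_nonneg_right hr.2 (norm_nonneg _)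
            _ = ‖Δ‖ := one_mul _
            _ < δ := hΔnorm
        calc (∫ r in (0:ℝ)..1, ⟪gradient w (c r), Δ⟫)
            ≤ ∫ _r in (0:ℝ)..1, (Real.sqrt (1 + ε) * ∫ s in t..u, φ s) :=
              intervalIntegral.integral_mono_on zero_le_one
                (hg'cont.intervalIntegrable 0 1) (_root_.intervalIntegrable_const) hbd
          _ = Real.sqrt (1 + ε) * ∫ s in t..u, φ s := by simp
          _ ≤ (1 + ε) * ∫ s in t..u, φ s := by
              refine mul_le_mul_of_nonneg_right ?_ hΦtu_nn
              nlinarith [Real.sq_sqrt (show (0:ℝ) ≤ 1 + ε by linarith),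
                Real.sqrt_nonneg (1 + ε)]
      refine ⟨u, ?_, htu, huv⟩
      have hadd : (∫ s in p..t, φ s) + ∫ s in t..u, φ s = ∫ s in p..u, φ s :=
        intervalIntegral.integral_add_adjacent_intervals
          (hφpq p t le_rfl ht.2.1 ht.2.2.le) (hφpq t u ht.2.1 htu.le huq)
      have hts : w (ω t) - w (ω p) ≤ (1 + ε) * ∫ s in p..t, φ s := ht.1
      have hmul : (1 + ε) * (∫ s in p..t, φ s) + (1 + ε) * (∫ s in t..u, φ s)
          = (1 + ε) * ∫ s in p..u, φ s := by rw [← mul_add, hadd]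
      show w (ω u) - w (ω p) ≤ (1 + ε) * ∫ s in p..u, φ s
      linarith

    have := hScl.Icc_subset_of_forall_exists_gt (by
      simp only [hS, mem_setOf_eq, intervalIntegral.integral_same, sub_self, mul_zero, le_refl])
      hstep
    exact (this ⟨hpq, le_rfl⟩ : q ∈ S)
  -- pass to the limit ε → 0
  have hΦnn : 0 ≤ ∫ t in p..q, φ t :=
    intervalIntegral.integral_nonneg hpq fun s _ => Real.sqrt_nonneg _
  refine le_of_forall_pos_le_add fun ε' hε' => ?_
  have hc := claim (ε' / ((∫ t in p..q, φ t) + 1)) (by positivity)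
  have hkey : (ε' / ((∫ t in p..q, φ t) + 1)) * ∫ t in p..q, φ t ≤ ε' := by
    rw [div_mul_eq_mul_div, div_le_iff₀ (by positivity)]
    nlinarith
  nlinarith [hc]


lemma integral_sqrt_le_sqrt_integral {e : ℝ → ℝ}
    (hEint : IntervalIntegrable e volume 0 1) (henn : ∀ t, 0 ≤ e t)
    (hsint : IntervalIntegrable (fun t => Real.sqrt (e t)) volume 0 1) :
    (∫ t in (0:ℝ)..1, Real.sqrt (e t)) ≤ Real.sqrt (∫ t in (0:ℝ)..1, e t) := by
  set J := ∫ t in (0:ℝ)..1, e t with hJdef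
  have hJ : 0 ≤ J := intervalIntegral.integral_nonneg zero_le_one fun t _ => henn t
  have hmain : ∀ c : ℝ, 0 < c → (∫ t in (0:ℝ)..1, Real.sqrt (e t)) ≤ J / (2 * c) + c / 2 := by
    intro c hc
    have hRint : IntervalIntegrable (fun t => e t / (2 * c) + c / 2) volume 0 1 :=
      (hEint.div_const (2 * c)).add (_root_.intervalIntegrable_const)
    have hpt : ∀ t ∈ Icc (0:ℝ) 1, Real.sqrt (e t) ≤ e t / (2 * c) + c / 2 := by
      intro t _
      have hsq := Real.sq_sqrt (henn t)
      have h2c : (0:ℝ) < 2 * c := by linarith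
      have key : 2 * c * Real.sqrt (e t) ≤ e t + c ^ 2 := by
        nlinarith [sq_nonneg (Real.sqrt (e t) - c)]
      calc Real.sqrt (e t) = (2 * c * Real.sqrt (e t)) / (2 * c) := by field_simp
        _ ≤ (e t + c ^ 2) / (2 * c) := (div_le_div_iff_of_pos_right h2c).2 key
        _ = e t / (2 * c) + c / 2 := by field_simp
    have hmono := intervalIntegral.integral_mono_on zero_le_one hsint hRint hpt
    have hre : (∫ t in (0:ℝ)..1, (e t / (2 * c) + c / 2)) = J / (2 * c) + c / 2 := by
      rw [intervalIntegral.integral_add (hEint.div_const (2 * c))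
        (_root_.intervalIntegrable_const), intervalIntegral.integral_div]
      simp [hJdef]
    rw [hre] at hmono
    exact hmono
  rcases eq_or_lt_of_le hJ with hJ0 | hJpos
  · have h0 : (∫ t in (0:ℝ)..1, Real.sqrt (e t)) ≤ 0 := by
      refine le_of_forall_pos_le_add fun ε hε => ?_
      have := hmain ε hε
      rw [← hJ0] at this
      simp only [zero_div] at this
      linarith
    rw [← hJ0, Real.sqrt_zero]
    exact h0
  · have hs := Real.mul_self_sqrt hJ
    have hspos : 0 < Real.sqrt J := Real.sqrt_pos.2 hJpos
    have heq : J / (2 * Real.sqrt J) + Real.sqrt J / 2 = Real.sqrt J := by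
      field_simp
      nlinarith
    have := hmain (Real.sqrt J) hspos
    rwa [heq] at this

lemma sqrt_comp_intervalIntegrable {e : ℝ → ℝ}
    (hEint : IntervalIntegrable e volume 0 1) (henn : ∀ t, 0 ≤ e t) :
    IntervalIntegrable (fun t => Real.sqrt (e t)) volume 0 1 := by
  have hbnd : IntervalIntegrable (fun t => (e t + 1) / 2) volume 0 1 :=
    (hEint.add (_root_.intervalIntegrable_const (c := 1))).div_const 2
  refine hbnd.mono_fun
    (Real.continuous_sqrt.comp_aestronglyMeasurable hEint.def'.aestronglyMeasurable)
    (Filter.Eventually.of_forall fun t => ?_)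
  have h1 : 0 ≤ Real.sqrt (e t) := Real.sqrt_nonneg _
  have h2 : Real.sqrt (e t) ≤ (e t + 1) / 2 := by
    have hsq : Real.sqrt (e t) ^ 2 = e t := Real.sq_sqrt (henn t)
    have := sq_nonneg (Real.sqrt (e t) - 1)
    nlinarith
  have h3 : (0:ℝ) ≤ (e t + 1) / 2 := le_trans h1 h2
  simp only [Real.norm_eq_abs, abs_of_nonneg h1, abs_of_nonneg h3]
  exact h2

/-- Let `a` be a continuous nonnegative symmetric quadratic form (in a chart, on `ℝ^d`),
let `ω ∈ H^{x,y}` be an absolutely continuous finite-energy path with driving path `ξ`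
(`ω t = x + ∫_0^t a(ω s) ξ s ds`) passing through the closed set `K`.  If `w⁻, w⁺` are
`C¹` functions with `a(∇w^±, ∇w^±) ≤ 1` everywhere and `w⁺ = w⁻` on `K`, then
`w⁺(y) − w⁻(x) ≤ √(I(ω))`. -/
theorem dual_distance_upper_bound (d : ℕ)
    (a : EuclideanSpace ℝ (Fin d) → EuclideanSpace ℝ (Fin d) →L[ℝ] EuclideanSpace ℝ (Fin d))
    (hacont : Continuous a)
    (hasymm : ∀ x u v, ⟪a x u, v⟫ = ⟪u, a x v⟫)
    (hapos : ∀ x v, 0 ≤ ⟪v, a x v⟫)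
    (x y : EuclideanSpace ℝ (Fin d))
    (ω ξ : ℝ → EuclideanSpace ℝ (Fin d))
    (hω0 : ω 0 = x) (hω1 : ω 1 = y)
    (hξint : IntervalIntegrable (fun s => a (ω s) (ξ s)) volume 0 1)
    (hAC : ∀ t ∈ Icc (0:ℝ) 1, ω t = x + ∫ s in (0:ℝ)..t, a (ω s) (ξ s))
    (hEint : IntervalIntegrable (fun t => ⟪ξ t, a (ω t) (ξ t)⟫) volume 0 1)
    (K : Set (EuclideanSpace ℝ (Fin d))) (hK : IsClosed K)
    (hhit : ∃ t ∈ Icc (0:ℝ) 1, ω t ∈ K)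
    (wm wp : EuclideanSpace ℝ (Fin d) → ℝ)
    (hwm : ContDiff ℝ 1 wm) (hwp : ContDiff ℝ 1 wp)
    (hwmgrad : ∀ z, ⟪gradient wm z, a z (gradient wm z)⟫ ≤ 1)
    (hwpgrad : ∀ z, ⟪gradient wp z, a z (gradient wp z)⟫ ≤ 1)
    (hwK : ∀ z ∈ K, wp z = wm z) :
    wp y - wm x ≤ Real.sqrt (∫ t in (0:ℝ)..1, ⟪ξ t, a (ω t) (ξ t)⟫) := by
  obtain ⟨t₀, ht₀, hKt₀⟩ := hhit
  have henn : ∀ t, (0:ℝ) ≤ ⟪ξ t, a (ω t) (ξ t)⟫ := fun t => hapos (ω t) (ξ t)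
  have h1 := seg_bound a hacont hasymm hapos x ω ξ hξint hAC hEint wm hwm hwmgrad
    0 t₀ le_rfl ht₀.1 ht₀.2
  have h2 := seg_bound a hacont hasymm hapos x ω ξ hξint hAC hEint wp hwp hwpgrad
    t₀ 1 ht₀.1 ht₀.2 le_rfl
  have hφint01 := sqrt_comp_intervalIntegrable hEint henn
  have hadd : (∫ t in (0:ℝ)..t₀, Real.sqrt ⟪ξ t, a (ω t) (ξ t)⟫)
      + (∫ t in t₀..(1:ℝ), Real.sqrt ⟪ξ t, a (ω t) (ξ t)⟫)
      = ∫ t in (0:ℝ)..1, Real.sqrt ⟪ξ t, a (ω t) (ξ t)⟫ :=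
    intervalIntegral.integral_add_adjacent_intervals
      (hφint01.mono_set (by
        rw [uIcc_of_le ht₀.1, uIcc_of_le zero_le_one]
        exact Icc_subset_Icc le_rfl ht₀.2))
      (hφint01.mono_set (by
        rw [uIcc_of_le ht₀.2, uIcc_of_le zero_le_one]
        exact Icc_subset_Icc ht₀.1 le_rfl))
  have hsqrt := integral_sqrt_le_sqrt_integral hEint henn hφint01
  have hwk : wp (ω t₀) = wm (ω t₀) := hwK _ hKt₀
  rw [hω0] at h1
  rw [hω1] at h2
  linarith
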